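/- Let G be an invertible symmetric 4×4 real matrix, u ∈ ℝ⁴ with uᵀGu = -1, κ, σ ∈ ℝ with κ ≠ 0, and ξ ∈ ℝ⁴. With P = G + (Gu)(Gu)ᵀ and M(ξ) the 5×5 principal symbol matrix (entries M(ξ)₀₀ = κ²(ξᵀu), M(ξ)₀,(1+β) = M(ξ)_(1+β),0 = σκ·(P G⁻¹ ξ)_β, M(ξ)_(1+α),(1+β) = (ξᵀu)·(G + 2(Gu)(Gu)ᵀ)_{αβ}), one has det M(ξ) = 0 if and only if ξᵀu = 0 or (ξᵀu)² = σ² · ξᵀ G⁻¹ P G⁻¹ ξ. -/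

import Mathlib

open Matrix

lemma vmv_mul {n : Type*} [Fintype n] (a b : n → ℝ) (N : Matrix n n ℝ) :
    vecMulVec a b * N = vecMulVec a (N.vecMul b) := by
  ext i j
  simp [vecMulVec_apply, mul_apply, vecMul, dotProduct, Finset.mul_sum, mul_assoc]

lemma vmv_vmv {n : Type*} [Fintype n] (a b c d : n → ℝ) :
    vecMulVec a b * vecMulVec c d = (b ⬝ᵥ c) • vecMulVec a d := by
  ext i j
  simp [vecMulVec_apply, mul_apply, dotProduct, Finset.sum_mul, Finset.mul_sum]
  exact Finset.sum_congr rfl fun k _ => by ring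

lemma vmv_transpose {n : Type*} (a b : n → ℝ) :
    (vecMulVec a b)ᵀ = vecMulVec b a := by
  ext i j; simp [vecMulVec_apply, mul_comm]

lemma dot_mulVec_mulVec {n : Type*} [Fintype n] (x y : n → ℝ) (A B : Matrix n n ℝ) :
    (A.mulVec x) ⬝ᵥ (B.mulVec y) = x ⬝ᵥ ((Aᵀ * B).mulVec y) :=
  calc (A.mulVec x) ⬝ᵥ (B.mulVec y) = ((A.mulVec x) ᵥ* B) ⬝ᵥ y := dotProduct_mulVec _ _ _
  _ = ((x ᵥ* Aᵀ) ᵥ* B) ⬝ᵥ y := by rw [vecMul_transpose]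
  _ = (x ᵥ* (Aᵀ*B)) ⬝ᵥ y := by rw [vecMul_vecMul]
  _ = x ⬝ᵥ ((Aᵀ*B).mulVec y) := (dotProduct_mulVec _ _ _).symm

theorem stmt3 (G : Matrix (Fin 4) (Fin 4) ℝ) (hG : G.IsSymm) (hGinv : IsUnit G.det)
    (u : Fin 4 → ℝ) (hu : u ⬝ᵥ G.mulVec u = -1)
    (κ σ : ℝ) (hκ : κ ≠ 0) (ξ : Fin 4 → ℝ)
    (M : Matrix (Fin 5) (Fin 5) ℝ)
    (hM00 : M 0 0 = κ ^ 2 * (ξ ⬝ᵥ u))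
    (hM0r : ∀ β : Fin 4,
      M 0 β.succ =
        σ * κ * ((G + vecMulVec (G.mulVec u) (G.mulVec u)) * G⁻¹).mulVec ξ β)
    (hMc0 : ∀ β : Fin 4,
      M β.succ 0 =
        σ * κ * ((G + vecMulVec (G.mulVec u) (G.mulVec u)) * G⁻¹).mulVec ξ β)
    (hMrc : ∀ α β : Fin 4,
      M α.succ β.succ =
        (ξ ⬝ᵥ u) * (G + (2 : ℝ) • vecMulVec (G.mulVec u) (G.mulVec u)) α β) :
    M.det = 0 ↔
      ξ ⬝ᵥ u = 0 ∨
        (ξ ⬝ᵥ u) ^ 2 =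
          σ ^ 2 *
            (ξ ⬝ᵥ (G⁻¹ * (G + vecMulVec (G.mulVec u) (G.mulVec u)) * G⁻¹).mulVec ξ) := by
  set w : Fin 4 → ℝ := G.mulVec u with hw
  set W : Matrix (Fin 4) (Fin 4) ℝ := vecMulVec w w with hWdef
  set K : Matrix (Fin 4) (Fin 4) ℝ := G⁻¹ with hK
  set P : Matrix (Fin 4) (Fin 4) ℝ := G + W with hP
  set Γm : Matrix (Fin 4) (Fin 4) ℝ := G + (2:ℝ) • W with hΓ
  set t : ℝ := ξ ⬝ᵥ u with ht
  set v : Fin 4 → ℝ := (P * K).mulVec ξ with hv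
  set q : ℝ := ξ ⬝ᵥ (K * P * K).mulVec ξ with hq
  have hGsymm : Gᵀ = G := hG
  have hGK : G * K = 1 := mul_nonsing_inv G hGinv
  have hKG : K * G = 1 := nonsing_inv_mul G hGinv
  have hKsymm : Kᵀ = K := by rw [hK, transpose_nonsing_inv, hGsymm]
  have hKw : K.mulVec w = u := by rw [hw, mulVec_mulVec, hKG, one_mulVec]
  have huw : u ⬝ᵥ w = -1 := hu
  have hwKvec : K.vecMul w = u := by
    rw [← hKsymm, vecMul_transpose, hKw]
  set X : Matrix (Fin 4) (Fin 4) ℝ := vecMulVec w u with hX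
  have hX2 : X * X = -X := by
    rw [hX, vmv_vmv, huw, neg_one_smul]
  have hWK : W * K = X := by rw [hWdef, vmv_mul, hwKvec]
  have hPK : P * K = 1 + X := by rw [hP, add_mul, hGK, hWK]
  have hΓK : Γm * K = 1 + (2:ℝ) • X := by
    rw [hΓ, add_mul, hGK, smul_mul_assoc, hWK]
  have e2 : (2:ℝ) • X = X + X := two_smul ℝ X
  have hPKPK : (P * K) * (P * K) = P * K := by
    rw [hPK]
    simp only [mul_add, add_mul, one_mul, mul_one, hX2, mul_neg, neg_neg]
    abel
  have hPKΓK : (P * K) * ((Γm * K) * (P * K)) = P * K := by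
    rw [hPK, hΓK, e2]
    simp only [mul_add, add_mul, one_mul, mul_one, hX2, mul_neg, neg_neg]
    abel
  have hΓKΓK : (Γm * K) * (Γm * K) = 1 := by
    rw [hΓK, e2]
    simp only [mul_add, add_mul, one_mul, mul_one, hX2, mul_neg, neg_neg]
    abel
  have h1eq : (1 : Fin 5) = (0 : Fin 4).succ := by decide
  have h2eq : (2 : Fin 5) = (1 : Fin 4).succ := by decide
  rcases eq_or_ne t 0 with ht0 | ht0
  · have hMz : ∀ α β : Fin 4, M α.succ β.succ = 0 := by
      intro α β; rw [hMrc, ht0, zero_mul]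
    have hr1 : ∀ β : Fin 4, M β.succ 1 = 0 := fun β => by rw [h1eq]; exact hMz β 0
    have hr2 : ∀ β : Fin 4, M β.succ 2 = 0 := fun β => by rw [h2eq]; exact hMz β 1
    have hdet : M.det = 0 := by
      rw [← Matrix.exists_mulVec_eq_zero_iff]
      by_cases h1 : M 0 1 = 0
      · refine ⟨fun j => if j = 1 then 1 else 0, ?_, ?_⟩
        · intro h
          have := congrFun h 1
          simp at this
        · ext i
          refine Fin.cases ?_ (fun β => ?_) i <;>
            simp [mulVec, dotProduct, Fin.sum_univ_five, h1, hr1, hr2]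
      · refine ⟨![0, M 0 2, -(M 0 1), 0, 0], ?_, ?_⟩
        · intro h
          have := congrFun h 2
          simp at this
          exact h1 this
        · ext i
          refine Fin.cases ?_ (fun β => ?_) i <;>
            simp [mulVec, dotProduct, Fin.sum_univ_five, hr1, hr2] <;> ring
    exact iff_of_true hdet (Or.inl ht0)
  · -- main case : t ≠ 0
    have hPsymm : Pᵀ = P := by rw [hP, transpose_add, hGsymm, hWdef, vmv_transpose]
    have hPKT : (P * K)ᵀ = K * P := by rw [transpose_mul, hKsymm, hPsymm]
    set A : Matrix (Fin 1) (Fin 1) ℝ := Matrix.of (fun _ _ => κ ^ 2 * t) with hA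
    set Bm : Matrix (Fin 1) (Fin 4) ℝ := Matrix.of (fun _ β => σ * κ * v β) with hB
    set Cm : Matrix (Fin 4) (Fin 1) ℝ := Matrix.of (fun β _ => σ * κ * v β) with hC
    set D : Matrix (Fin 4) (Fin 4) ℝ := t • Γm with hD
    set E : Matrix (Fin 4) (Fin 4) ℝ := t⁻¹ • (K * Γm * K) with hE
    have hΓright : Γm * (K * Γm * K) = 1 := by
      simp only [← Matrix.mul_assoc] at hΓKΓK ⊢
      exact hΓKΓK
    have hDE : D * E = 1 := by
      rw [hD, hE, smul_mul_assoc, mul_smul_comm, smul_smul, mul_inv_cancel₀ ht0,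
        hΓright, one_smul]
    have hED : E * D = 1 := mul_eq_one_comm.mp hDE
    haveI hDinv : Invertible D := ⟨E, hED, hDE⟩
    have hDdet : D.det ≠ 0 := (Matrix.isUnit_det_of_right_inverse hDE).ne_zero
    have heL : ∀ i : Fin 1, finSumFinEquiv (Sum.inl i : Fin 1 ⊕ Fin 4) = (0 : Fin 5) := by decide
    have heR : ∀ β : Fin 4, finSumFinEquiv (Sum.inr β : Fin 1 ⊕ Fin 4) = (β.succ : Fin 5) := by decide
    have hsub : M.submatrix (finSumFinEquiv : Fin 1 ⊕ Fin 4 ≃ Fin 5)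
        (finSumFinEquiv : Fin 1 ⊕ Fin 4 ≃ Fin 5) = fromBlocks A Bm Cm D := by
      ext i j
      cases i with
      | inl i =>
        cases j with
        | inl j =>
          simp [heL, fromBlocks, hM00, hA]
        | inr j =>
          simp [heL, heR, fromBlocks, hM0r, hB]
      | inr i =>
        cases j with
        | inl j =>
          simp [heL, heR, fromBlocks, hMc0, hC]
        | inr j =>
          simp [heR, fromBlocks, hMrc, hD]
    have hdet5 : M.det = D.det * (A - Bm * E * Cm).det := by
      rw [← det_submatrix_equiv_self (finSumFinEquiv : Fin 1 ⊕ Fin 4 ≃ Fin 5) M, hsub,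
        det_fromBlocks₂₂, invOf_eq_right_inv hDE]
    have key : (K * P) * (K * Γm * K * (P * K)) = K * P * K := by
      have h' := congrArg (fun N => K * N) hPKΓK
      simp only [← Matrix.mul_assoc] at h' ⊢
      exact h'
    have hvq : v ⬝ᵥ (K * Γm * K).mulVec v = q := by
      rw [hq, hv, mulVec_mulVec, dot_mulVec_mulVec, hPKT, key]
    have hBEC : (Bm * E * Cm) 0 0 = σ ^ 2 * κ ^ 2 * t⁻¹ * q := by
      rw [← hvq, hB, hC, hE]
      simp only [mul_apply, of_apply, dotProduct, mulVec, Matrix.smul_apply, smul_eq_mul,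
        Fin.sum_univ_one, Finset.sum_mul, Finset.mul_sum]
      rw [Finset.sum_comm]
      refine Finset.sum_congr rfl fun i _ => Finset.sum_congr rfl fun j _ =>
        Finset.sum_congr rfl fun a _ => Finset.sum_congr rfl fun b _ => by ring
    have hSchur : (A - Bm * E * Cm).det = κ ^ 2 * t⁻¹ * (t ^ 2 - σ ^ 2 * q) := by
      rw [det_fin_one, Matrix.sub_apply, hBEC, hA]
      simp only [of_apply]
      field_simp
    rw [hdet5, hSchur]
    have hfac : κ ^ 2 * t⁻¹ ≠ 0 := by positivity
    constructor
    · intro h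
      rcases mul_eq_zero.mp h with h | h
      · exact absurd h hDdet
      · rcases mul_eq_zero.mp h with h | h
        · exact absurd h hfac
        · exact Or.inr (by linarith [sub_eq_zero.mp h])
    · intro h
      rcases h with h | h
      · exact absurd h ht0
      · rw [sub_eq_zero.mpr h]
        ring
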